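/- If S and O are anticommuting Hermitian involutions and ρ is a density matrix with Tr[ρS] ≥ 1 - 2ε for 0 ≤ ε ≤ 1/2, then |Tr[ρO]| ≤ 2√ε. -/

import Mathlib

open scoped ComplexOrder
open Matrix

lemma aux_trace_re_nonneg {n : ℕ} {A : Matrix (Fin n) (Fin n) ℂ} (hA : A.PosSemidef) :
    0 ≤ A.trace.re := by
  have h : ∀ i, 0 ≤ (A i i).re := by
    intro i
    have := hA.re_dotProduct_nonneg (Pi.single i 1)
    simpa [dotProduct, Matrix.mulVec, Pi.single_apply] using this
  simpa [Matrix.trace, Matrix.diag] using Finset.sum_nonneg (fun i _ => h i)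

lemma aux_trace_mul_re_nonneg {n : ℕ} {A B : Matrix (Fin n) (Fin n) ℂ}
    (hA : A.PosSemidef) (hB : B.PosSemidef) : 0 ≤ ((A * B).trace).re := by
  obtain ⟨C, hC⟩ : ∃ C : Matrix (Fin n) (Fin n) ℂ, B = Cᴴ * C := by
    open scoped MatrixOrder in
    exact ⟨CFC.sqrt B, by
      rw [(CFC.sqrt_nonneg B).posSemidef.isHermitian.eq, CFC.sqrt_mul_sqrt_self B hB.nonneg]⟩
  have h1 : A * B = A * Cᴴ * C := by rw [hC, Matrix.mul_assoc]
  have h2 : (A * Cᴴ * C).trace = (C * A * Cᴴ).trace := by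
    rw [Matrix.trace_mul_cycle]
  rw [h1, h2]
  exact aux_trace_re_nonneg (hA.mul_mul_conjTranspose_same C)

lemma aux_smul_psd {n : ℕ} {r : ℝ} (hr : 0 ≤ r) {A : Matrix (Fin n) (Fin n) ℂ}
    (hA : A.PosSemidef) : ((r : ℂ) • A).PosSemidef := by
  refine ⟨?_, fun x => ?_⟩
  · simp [Matrix.IsHermitian, Matrix.conjTranspose_smul, hA.1.eq, Complex.conj_ofReal]
  · exact (hA.smul (a := (r : ℂ)) (by exact_mod_cast hr)).2 x

/-- If `S` and `O` are anticommuting Hermitian involutions and `ρ` is a density matrix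
with `Tr[ρS] ≥ 1 - 2ε` for `0 ≤ ε ≤ 1/2`, then `|Tr[ρO]| ≤ 2√ε`. -/
theorem abs_trace_anticommuting_le {n : ℕ}
    (S O ρ : Matrix (Fin n) (Fin n) ℂ) (ε : ℝ)
    (hS : S.IsHermitian) (hS2 : S * S = 1)
    (hO : O.IsHermitian) (hO2 : O * O = 1)
    (hanti : S * O = -(O * S))
    (hρ : ρ.PosSemidef) (hρtr : ρ.trace = 1)
    (hε0 : 0 ≤ ε) (hε1 : ε ≤ 1 / 2)
    (htrS : 1 - 2 * ε ≤ ((ρ * S).trace).re) :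
    |((ρ * O).trace).re| ≤ 2 * Real.sqrt ε := by
  set s : ℝ := ((ρ * S).trace).re with hs
  set o : ℝ := ((ρ * O).trace).re with ho
  -- key inequality : s^2 + o^2 ≤ 1
  have key : s ^ 2 + o ^ 2 ≤ 1 := by
    rcases eq_or_lt_of_le (by positivity : (0:ℝ) ≤ s ^ 2 + o ^ 2) with h | h
    · linarith
    · set c : ℝ := Real.sqrt (s ^ 2 + o ^ 2) with hc
      have hcpos : 0 < c := Real.sqrt_pos.mpr h
      have hc2 : c ^ 2 = s ^ 2 + o ^ 2 := Real.sq_sqrt (le_of_lt h)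
      set T : Matrix (Fin n) (Fin n) ℂ := (s : ℂ) • S + (o : ℂ) • O with hT
      have hSO : S * O + O * S = 0 := by rw [hanti]; exact neg_add_cancel _
      have hT2 : T * T = ((s : ℂ) ^ 2 + (o : ℂ) ^ 2) • 1 := by
        have expand : T * T = (s : ℂ) ^ 2 • (S * S) + ((s : ℂ) * (o : ℂ)) • (S * O + O * S)
            + (o : ℂ) ^ 2 • (O * O) := by
          simp only [hT, add_mul, mul_add, Matrix.smul_mul, Matrix.mul_smul, smul_add]
          module
        rw [expand, hSO, smul_zero, hS2, hO2, add_zero, ← add_smul]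
      set M : Matrix (Fin n) (Fin n) ℂ := (c : ℂ) • 1 - T with hM
      have hTH : T.IsHermitian := by
        simp [Matrix.IsHermitian, hT, Matrix.conjTranspose_add, Matrix.conjTranspose_smul,
          hS.eq, hO.eq, Complex.conj_ofReal]
      have hMH : M.IsHermitian := by
        simp [Matrix.IsHermitian, hM, Matrix.conjTranspose_sub, Matrix.conjTranspose_smul,
          hTH.eq, Complex.conj_ofReal]
      have hMM : M * M = ((2 * c : ℝ) : ℂ) • M := by
        have : M * M = (c : ℂ) ^ 2 • 1 - (2 * (c : ℂ)) • T + T * T := by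
          simp only [hM, sub_mul, mul_sub, Matrix.smul_mul, Matrix.mul_smul, Matrix.one_mul,
            Matrix.mul_one]
          module
        rw [this, hT2, hM]
        have hcc : ((s : ℂ) ^ 2 + (o : ℂ) ^ 2) = (c : ℂ) ^ 2 := by
          exact_mod_cast congrArg (fun x : ℝ => (x : ℂ)) hc2.symm
        rw [hcc]
        push_cast
        module
      have hMpsd : M.PosSemidef := by
        have h1 : M = ((1 / (2 * c) : ℝ) : ℂ) • (Mᴴ * M) := by
          rw [hMH.eq, hMM]
          rw [smul_smul]
          rw [← Complex.ofReal_mul]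
          rw [one_div, inv_mul_cancel₀ (mul_pos two_pos hcpos).ne']
          simp
        rw [h1]
        exact aux_smul_psd (by positivity) (Matrix.posSemidef_conjTranspose_mul_self M)
      have htr : 0 ≤ ((ρ * M).trace).re := aux_trace_mul_re_nonneg hρ hMpsd
      have hcomp : ((ρ * M).trace).re = c - (s * s + o * o) := by
        simp only [hM, hT, Matrix.mul_sub, Matrix.mul_add, Matrix.mul_smul, Matrix.mul_one,
          Matrix.trace_sub, Matrix.trace_add, Matrix.trace_smul, smul_eq_mul, hρtr, mul_one]
        simp [Complex.sub_re, Complex.add_re, Complex.mul_re, Complex.ofReal_re,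
          Complex.ofReal_im]
        rw [← hs, ← ho]
      rw [hcomp] at htr
      have hcle : c ≤ 1 := by nlinarith [hc2]
      nlinarith [hc2]
  have hs0 : 0 ≤ s := by linarith
  have ho2 : o ^ 2 ≤ 4 * ε := by nlinarith
  calc |o| = Real.sqrt (o ^ 2) := (Real.sqrt_sq_eq_abs o).symm
    _ ≤ Real.sqrt ((2 * Real.sqrt ε) ^ 2) := by
        apply Real.sqrt_le_sqrt
        rw [mul_pow, Real.sq_sqrt hε0]; linarith
    _ = 2 * Real.sqrt ε := Real.sqrt_sq (by positivity)
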